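/- Fix an integer m ≥ 2 and a nonempty multiset Z = {z_1, z_2, ..., z_n} of integers. Then for every integer s, | (1/2^n) · #{ x ∈ {0,1}^n : Σ_{j=1}^n z_j x_j ≡ s (mod m) } − 1/m | ≤ ((1 + disc(Z, m))/2)^{n/2}. -/

import Mathlib

/-- The `m`-discrepancy of a finite multiset `Z` of integers:
`disc(Z, m) = max_{k = 1, …, m−1} |(1/|Z|) · Σ_{z ∈ Z} exp(2πi·k·z/m)|`,
with the convention `disc(∅, m) = 0`. -/
noncomputable def disc (Z : Multiset ℤ) (m : ℕ) : ℝ :=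
  if h : (Finset.Ioo 0 m).Nonempty then
    (Finset.Ioo 0 m).sup' h fun k =>
      ‖((Z.map fun z : ℤ =>
        Complex.exp (2 * Real.pi * Complex.I * (k : ℂ) * (z : ℂ) / (m : ℂ))).sum)‖ / (Z.card : ℝ)
  else 0

noncomputable def ee (m : ℕ) (t : ℤ) : ℂ :=
  Complex.exp (2 * Real.pi * Complex.I * (t : ℂ) / (m : ℂ))

lemma ee_add (m : ℕ) (a b : ℤ) : ee m (a + b) = ee m a * ee m b := by
  unfold ee; rw [← Complex.exp_add]; congr 1; push_cast; ring

lemma ee_zero (m : ℕ) : ee m 0 = 1 := by unfold ee; simp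

lemma ee_nat_mul (m : ℕ) (k : ℕ) (t : ℤ) : ee m (k * t) = ee m t ^ k := by
  unfold ee
  rw [← Complex.exp_nat_mul]
  congr 1
  push_cast
  ring

lemma abs_ee (m : ℕ) (t : ℤ) : ‖ee m t‖ = 1 := by
  unfold ee
  rw [show 2 * Real.pi * Complex.I * (t : ℂ) / (m : ℂ)
      = ((2 * Real.pi * t / m : ℝ) : ℂ) * Complex.I by push_cast; ring]
  exact Complex.norm_exp_ofReal_mul_I _

lemma ee_orth (m : ℕ) (hm : m ≠ 0) (t : ℤ) :
    ∑ k ∈ Finset.range m, ee m ((k : ℤ) * t) = if (m : ℤ) ∣ t then (m : ℂ) else 0 := by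
  have hmC : (m : ℂ) ≠ 0 := Nat.cast_ne_zero.mpr hm
  have hpow : ∀ k ∈ Finset.range m, ee m ((k : ℤ) * t) = ee m t ^ k := by
    intro k _
    have := ee_nat_mul m k t
    rwa [show ((k : ℕ) : ℤ) * t = (k : ℤ) * t by ring] at this
  rw [Finset.sum_congr rfl hpow]
  have h2pi : (2 * (Real.pi : ℂ) * Complex.I) ≠ 0 := by
    simp [Real.pi_ne_zero, Complex.I_ne_zero]
  by_cases hd : (m : ℤ) ∣ t
  · obtain ⟨c, rfl⟩ := hd
    have hζ : ee m ((m : ℤ) * c) = 1 := by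
      unfold ee
      rw [show 2 * (Real.pi : ℂ) * Complex.I * (((m : ℤ) * c : ℤ) : ℂ) / (m : ℂ)
          = (c : ℂ) * (2 * (Real.pi : ℂ) * Complex.I) by push_cast; field_simp]
      exact Complex.exp_int_mul_two_pi_mul_I c
    simp [hζ, Dvd.intro c rfl]
  · have hζm : ee m t ^ m = 1 := by
      rw [← ee_nat_mul]
      unfold ee
      rw [show 2 * (Real.pi : ℂ) * Complex.I * (((m : ℕ) * t : ℤ) : ℂ) / (m : ℂ)
          = (t : ℂ) * (2 * (Real.pi : ℂ) * Complex.I) by push_cast; field_simp]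
      exact Complex.exp_int_mul_two_pi_mul_I t
    have hζ : ee m t ≠ 1 := by
      intro h
      unfold ee at h
      rw [Complex.exp_eq_one_iff] at h
      obtain ⟨c, hc⟩ := h
      apply hd
      refine ⟨c, ?_⟩
      have key : (t : ℂ) * (2 * (Real.pi : ℂ) * Complex.I)
          = (((m : ℤ) * c : ℤ) : ℂ) * (2 * (Real.pi : ℂ) * Complex.I) := by
        field_simp at hc
        push_cast
        linear_combination (2 * (Real.pi : ℂ) * Complex.I) * hc
      have := mul_right_cancel₀ h2pi key
      exact_mod_cast this
    rw [geom_sum_eq hζ, hζm]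
    simp [hd]

lemma ee_sum {n : ℕ} (m : ℕ) (f : Fin n → ℤ) :
    ee m (∑ j, f j) = ∏ j, ee m (f j) := by
  induction n with
  | zero => simp [ee_zero]
  | succ n ih =>
    rw [Fin.sum_univ_succ, Fin.prod_univ_succ, ee_add, ih (fun j => f j.succ)]

lemma cube_sum (n m : ℕ) (k : ℤ) (z : Fin n → ℤ) :
    ∑ x : Fin n → Bool, ee m (k * ∑ j, if x j then z j else 0)
      = ∏ j, (1 + ee m (k * z j)) := by
  have h1 : ∀ x : Fin n → Bool, ee m (k * ∑ j, if x j then z j else 0)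
      = ∏ j, (if x j then ee m (k * z j) else 1) := by
    intro x
    rw [Finset.mul_sum, ee_sum]
    refine Finset.prod_congr rfl fun j _ => ?_
    by_cases h : x j <;> simp [h, ee_zero]
  simp_rw [h1]
  rw [← Fintype.piFinset_univ,
    ← Finset.prod_univ_sum (fun _ => (Finset.univ : Finset Bool))
      (fun j b => if b then ee m (k * z j) else 1)]
  refine Finset.prod_congr rfl fun j _ => ?_
  simp [add_comm]

lemma amgm {n : ℕ} (hn : 0 < n) (b : Fin n → ℝ) (hb : ∀ j, 0 ≤ b j) :
    ∏ j, b j ≤ ((∑ j, b j) / n) ^ n := by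
  have hnR : (0:ℝ) < n := by exact_mod_cast hn
  have key := Real.geom_mean_le_arith_mean_weighted Finset.univ (fun _ => 1 / n) b
    (fun i _ => by positivity) (by simp; field_simp) (fun i _ => hb i)
  have hprod : ∏ j, b j ^ ((1:ℝ) / n) = (∏ j, b j) ^ ((1:ℝ) / n) := by
    rw [← Real.finset_prod_rpow _ _ (fun i _ => hb i)]
  have hsum : ∑ j, (1 / (n:ℝ)) * b j = (∑ j, b j) / n := by
    rw [Finset.sum_div]; exact Finset.sum_congr rfl fun j _ => by ring
  rw [hprod, hsum] at key
  have h1 : ((∏ j, b j) ^ ((1:ℝ) / n)) ^ (n:ℕ) ≤ ((∑ j, b j) / n) ^ (n:ℕ) := by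
    apply pow_le_pow_left₀ (Real.rpow_nonneg (Finset.prod_nonneg fun j _ => hb j) _) key
  rwa [← Real.rpow_natCast ((∏ j, b j) ^ ((1:ℝ)/n)) n, ← Real.rpow_mul
    (Finset.prod_nonneg fun j _ => hb j), one_div, inv_mul_cancel₀ (ne_of_gt hnR),
    Real.rpow_one] at h1

lemma ioo_ne (m : ℕ) (hm : 2 ≤ m) : (Finset.Ioo 0 m).Nonempty :=
  ⟨1, Finset.mem_Ioo.mpr ⟨one_pos, by omega⟩⟩

lemma disc_ge {n : ℕ} (m : ℕ) (hm : 2 ≤ m) (z : Fin n → ℤ) (k : ℕ)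
    (hk : k ∈ Finset.Ioo 0 m) :
    ‖∑ j, ee m ((k : ℤ) * z j)‖ / n ≤ disc (Multiset.map z Finset.univ.val) m := by
  rw [disc, dif_pos (ioo_ne m hm)]
  have hcard : (Multiset.map z Finset.univ.val).card = n := by simp
  have hsum : ((Multiset.map z Finset.univ.val).map fun w : ℤ =>
      Complex.exp (2 * Real.pi * Complex.I * (k : ℂ) * (w : ℂ) / (m : ℂ))).sum
      = ∑ j, ee m ((k : ℤ) * z j) := by
    rw [Multiset.map_map]
    rw [show (∑ j, ee m ((k : ℤ) * z j)) = ∑ j, Complex.exp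
        (2 * Real.pi * Complex.I * (k : ℂ) * ((z j : ℤ) : ℂ) / (m : ℂ)) from
      Finset.sum_congr rfl fun j _ => by unfold ee; congr 1; push_cast; ring]
    rfl
  have := Finset.le_sup' (f := fun k : ℕ =>
    ‖(((Multiset.map z Finset.univ.val).map fun w : ℤ =>
      Complex.exp (2 * Real.pi * Complex.I * (k : ℂ) * (w : ℂ) / (m : ℂ))).sum)‖
      / ((Multiset.map z Finset.univ.val).card : ℝ)) hk
  rw [hsum] at this
  simp only [hcard] at this ⊢
  exact this

lemma disc_nonneg {n : ℕ} (m : ℕ) (hm : 2 ≤ m) (z : Fin n → ℤ) :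
    0 ≤ disc (Multiset.map z Finset.univ.val) m := by
  refine le_trans ?_ (disc_ge m hm z 1 (Finset.mem_Ioo.mpr ⟨one_pos, by omega⟩))
  positivity

lemma prod_bound {n : ℕ} (m : ℕ) (hm : 2 ≤ m) (hn : 0 < n) (z : Fin n → ℤ) (k : ℕ)
    (hk : k ∈ Finset.Ioo 0 m) :
    ∏ j, ‖1 + ee m ((k : ℤ) * z j)‖ ≤
      2 ^ n * ((1 + disc (Multiset.map z Finset.univ.val) m) / 2) ^ ((n : ℝ) / 2) := by
  set d := disc (Multiset.map z Finset.univ.val) m with hd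
  set b : Fin n → ℝ := fun j => (1 + (ee m ((k : ℤ) * z j)).re) / 2 with hbdef
  have hnR : (0:ℝ) < n := by exact_mod_cast hn
  have hsq : ∀ j, (‖1 + ee m ((k : ℤ) * z j)‖) ^ 2 = 4 * b j := by
    intro j
    rw [Complex.sq_norm, Complex.normSq_add]
    have h1 : Complex.normSq (ee m ((k : ℤ) * z j)) = 1 := by
      rw [← Complex.sq_norm, abs_ee]; norm_num
    simp [h1, hbdef, Complex.normSq_one]
    ring
  have hb : ∀ j, 0 ≤ b j := by
    intro j
    have := hsq j
    nlinarith [sq_nonneg (‖1 + ee m ((k : ℤ) * z j)‖)]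
  have hA : (∑ j, b j) / n ≤ (1 + d) / 2 := by
    have hre : ∑ j, (ee m ((k : ℤ) * z j)).re = (∑ j, ee m ((k : ℤ) * z j)).re := by
      rw [Complex.re_sum]
    have hle : (∑ j, ee m ((k : ℤ) * z j)).re ≤ n * d := by
      calc (∑ j, ee m ((k : ℤ) * z j)).re ≤ ‖∑ j, ee m ((k : ℤ) * z j)‖ :=
            Complex.re_le_norm _
        _ ≤ n * d := by
            have := disc_ge m hm z k hk
            rw [div_le_iff₀ hnR] at this
            linarith [this]
    have hsumb : ∑ j, b j = (n + ∑ j, (ee m ((k : ℤ) * z j)).re) / 2 := by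
      simp only [hbdef]
      rw [← Finset.sum_div, Finset.sum_add_distrib, Finset.sum_const, Finset.card_univ,
        Fintype.card_fin, nsmul_eq_mul, mul_one]
    rw [hsumb, hre, div_div, div_le_div_iff₀ (by positivity) (by norm_num : (0:ℝ) < 2)]
    nlinarith [hle]
  have hA0 : 0 ≤ (∑ j, b j) / n := div_nonneg (Finset.sum_nonneg fun j _ => hb j) hnR.le
  have hd0 : 0 ≤ d := disc_nonneg m hm z
  have hB0 : (0:ℝ) ≤ (1 + d) / 2 := by linarith
  have hprodb : ∏ j, b j ≤ ((1 + d) / 2) ^ n :=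
    le_trans (amgm hn b hb) (pow_le_pow_left₀ hA0 hA n)
  set P := ∏ j, ‖1 + ee m ((k : ℤ) * z j)‖ with hP
  have hP0 : 0 ≤ P := Finset.prod_nonneg fun j _ => norm_nonneg _
  have hPsq : P ^ 2 ≤ 4 ^ n * ((1 + d) / 2) ^ n := by
    rw [hP, ← Finset.prod_pow]
    calc ∏ j, ‖1 + ee m ((k : ℤ) * z j)‖ ^ 2 = ∏ j, (4 * b j) :=
          Finset.prod_congr rfl fun j _ => hsq j
      _ = 4 ^ n * ∏ j, b j := by
          rw [Finset.prod_mul_distrib, Finset.prod_const, Finset.card_univ, Fintype.card_fin]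
      _ ≤ 4 ^ n * ((1 + d) / 2) ^ n := by
          apply mul_le_mul_of_nonneg_left hprodb (by positivity)
  calc P = Real.sqrt (P ^ 2) := (Real.sqrt_sq hP0).symm
    _ ≤ Real.sqrt (4 ^ n * ((1 + d) / 2) ^ n) := Real.sqrt_le_sqrt hPsq
    _ = 2 ^ n * ((1 + d) / 2) ^ ((n : ℝ) / 2) := by
        rw [Real.sqrt_mul (by positivity)]
        congr 1
        · rw [show (4:ℝ) ^ n = ((2:ℝ) ^ n) ^ 2 by rw [← pow_mul, mul_comm, pow_mul]; norm_num,
            Real.sqrt_sq (by positivity)]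
        · rw [Real.sqrt_eq_rpow, ← Real.rpow_natCast ((1 + d) / 2) n, ← Real.rpow_mul hB0]
          congr 1
          ring

open Classical in
theorem stmt_12 (m n : ℕ) (hm : 2 ≤ m) (hn : 0 < n) (z : Fin n → ℤ) (s : ℤ) :
    |((Finset.univ.filter fun x : Fin n → Bool =>
          (∑ j, if x j then z j else 0) ≡ s [ZMOD (m : ℤ)]).card : ℝ) / 2 ^ n - 1 / m| ≤
      ((1 + disc (Multiset.map z Finset.univ.val) m) / 2) ^ ((n : ℝ) / 2) := by
  have hmR : (0:ℝ) < m := by positivity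
  have hmC : (m : ℂ) ≠ 0 := Nat.cast_ne_zero.mpr (by omega)
  have h2C : ((2:ℂ)) ^ n ≠ 0 := pow_ne_zero _ two_ne_zero
  set d := disc (Multiset.map z Finset.univ.val) m with hdd
  have hd0 : 0 ≤ d := disc_nonneg m hm z
  set B : ℝ := ((1 + d) / 2) ^ ((n : ℝ) / 2) with hBdef
  have hB0 : 0 ≤ B := Real.rpow_nonneg (by linarith) _
  set N : ℕ := (Finset.univ.filter fun x : Fin n → Bool =>
      (∑ j, if x j then z j else 0) ≡ s [ZMOD (m : ℤ)]).card with hN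
  clear_value N
  set g : ℕ → ℂ := fun k => ee m ((k : ℤ) * (-s)) * ∏ j, (1 + ee m ((k : ℤ) * z j)) with hg
  clear_value g
  have key : (N : ℂ) = (2:ℂ) ^ n / m + (1 / m) * ∑ k ∈ Finset.Ioo 0 m, g k := by
    have ind : ∀ S : ℤ, (if S ≡ s [ZMOD (m:ℤ)] then (1:ℂ) else 0)
        = (1 / m) * ∑ k ∈ Finset.range m, ee m ((k:ℤ) * (S - s)) := by
      intro S
      rw [ee_orth m (Nat.one_le_iff_ne_zero.mp (le_trans one_le_two hm))]
      have hiff : S ≡ s [ZMOD (m:ℤ)] ↔ (m:ℤ) ∣ (S - s) := by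
        rw [Int.modEq_iff_dvd, dvd_sub_comm]
      rw [if_congr hiff rfl rfl]
      by_cases h : (m:ℤ) ∣ S - s
      · rw [if_pos h, if_pos h]
        field_simp
      · rw [if_neg h, if_neg h, mul_zero]
    have step1 : (N : ℂ) = ∑ x : Fin n → Bool,
        if (∑ j, if x j then z j else 0) ≡ s [ZMOD (m:ℤ)] then (1:ℂ) else 0 := by
      rw [hN, Finset.card_filter]
      push_cast [apply_ite]
      rfl
    rw [step1]
    calc (∑ x : Fin n → Bool,
          if (∑ j, if x j then z j else 0) ≡ s [ZMOD (m:ℤ)] then (1:ℂ) else 0)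
        = ∑ x : Fin n → Bool, (1 / m) *
            ∑ k ∈ Finset.range m, ee m ((k:ℤ) * ((∑ j, if x j then z j else 0) - s)) := by
          exact Finset.sum_congr rfl fun x _ => ind _
      _ = (1 / m) * ∑ k ∈ Finset.range m, ee m ((k:ℤ) * (-s)) *
            ∑ x : Fin n → Bool, ee m ((k:ℤ) * ∑ j, if x j then z j else 0) := by
          rw [← Finset.mul_sum, Finset.sum_comm]
          congr 1
          refine Finset.sum_congr rfl fun k _ => ?_
          rw [Finset.mul_sum]
          refine Finset.sum_congr rfl fun x _ => ?_
          rw [← ee_add]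
          congr 1
          ring
      _ = (1 / m) * ∑ k ∈ Finset.range m, g k := by
          congr 1
          refine Finset.sum_congr rfl fun k _ => ?_
          rw [cube_sum, hg]
      _ = (2:ℂ) ^ n / m + (1 / m) * ∑ k ∈ Finset.Ioo 0 m, g k := by
          have hsplit : Finset.range m = insert 0 (Finset.Ioo 0 m) := by
            rw [Finset.range_eq_Ico, ← Finset.Ioo_insert_left (lt_of_lt_of_le two_pos hm)]
          have h0 : (0:ℕ) ∉ Finset.Ioo 0 m := by simp
          rw [hsplit, Finset.sum_insert h0]
          have hg0 : g 0 = (2:ℂ) ^ n := by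
            simp only [hg, Nat.cast_zero, zero_mul, ee_zero, one_mul]
            rw [Finset.prod_const]
            norm_num
          rw [hg0]
          ring
  have keydiff : (N : ℂ) / 2 ^ n - 1 / m = (1 / m) * (∑ k ∈ Finset.Ioo 0 m, g k) / 2 ^ n := by
    rw [key]
    field_simp
    ring
  have habs : |((N : ℝ)) / 2 ^ n - 1 / m|
      = ‖(N : ℂ) / 2 ^ n - 1 / m‖ := by
    rw [show ((N : ℂ) / 2 ^ n - 1 / m) = (((N : ℝ) / 2 ^ n - 1 / m : ℝ) : ℂ) by push_cast; ring]
    rw [Complex.norm_real, Real.norm_eq_abs]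
  rw [habs, keydiff]
  have hterm : ∀ k ∈ Finset.Ioo 0 m, ‖g k‖ ≤ 2 ^ n * B := by
    intro k hk
    rw [hg]
    simp only
    rw [norm_mul, abs_ee, one_mul, norm_prod]
    exact prod_bound m hm hn z k hk
  have hsum : ‖∑ k ∈ Finset.Ioo 0 m, g k‖ ≤ (m - 1) * (2 ^ n * B) := by
    calc ‖∑ k ∈ Finset.Ioo 0 m, g k‖
        ≤ ∑ k ∈ Finset.Ioo 0 m, ‖g k‖ := norm_sum_le _ _
      _ ≤ ∑ k ∈ Finset.Ioo 0 m, (2 ^ n * B) := Finset.sum_le_sum hterm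
      _ = (m - 1) * (2 ^ n * B) := by
          rw [Finset.sum_const, Nat.card_Ioo, nsmul_eq_mul]
          congr 1
          rw [Nat.sub_zero]
          push_cast [Nat.cast_sub (le_trans one_le_two hm)]
          ring
  rw [norm_div, norm_mul]
  have e1 : ‖(1 / m : ℂ)‖ = 1 / m := by
    rw [norm_div, norm_one, Complex.norm_natCast]
  have e2 : ‖(2:ℂ) ^ n‖ = 2 ^ n := by
    rw [norm_pow, Complex.norm_two]
  rw [e1, e2]
  calc 1 / (m:ℝ) * ‖∑ k ∈ Finset.Ioo 0 m, g k‖ / 2 ^ n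
      ≤ 1 / (m:ℝ) * ((m - 1) * (2 ^ n * B)) / 2 ^ n := by
        apply div_le_div_of_nonneg_right ?_ (by positivity)
        exact mul_le_mul_of_nonneg_left hsum (by positivity)
    _ ≤ B := by
        rw [div_le_iff₀ (by positivity : (0:ℝ) < 2 ^ n)]
        have h1 : ((m:ℝ) - 1) / m ≤ 1 := by
          rw [div_le_one hmR]; linarith
        have h2 : (0:ℝ) ≤ 2 ^ n * B := by positivity
        rw [show 1/(m:ℝ) * (((m:ℝ)-1) * (2^n*B)) = (((m:ℝ)-1)/m) * (2^n*B) from by ring]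
        calc (((m:ℝ)-1)/m) * (2^n*B) ≤ 1 * (2^n*B) := mul_le_mul_of_nonneg_right h1 h2
          _ = B * 2 ^ n := by ring
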